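/- Let T be a power partial isometry on a Hilbert space H. Then the closed subspace PH = ⋂_{n≥1} T^n H is reducing for T (invariant under both T and T*), and the restriction of T to PH is a co-isometry, i.e., T* restricted to PH is an isometry. -/

import Mathlib

open ContinuousLinearMap

section Aux

variable {H : Type*} [NormedAddCommGroup H] [InnerProductSpace ℂ H] [CompleteSpace H]

private lemma aux_inner_proj (E : H →L[ℂ] H) (hsa : adjoint E = E) (hid : E * E = E) (w : H) :
    (inner ℂ w (E w) : ℂ) = inner ℂ (E w) (E w) := by
  conv_lhs => rw [← hid, ContinuousLinearMap.mul_apply]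
  rw [← adjoint_inner_left, hsa]

private lemma aux_proj_norm_le (E : H →L[ℂ] H) (hsa : adjoint E = E) (hid : E * E = E) (w : H) :
    ‖E w‖ ≤ ‖w‖ := by
  have h1 : ‖E w‖ ^ 2 = RCLike.re (inner ℂ w (E w) : ℂ) := by
    rw [aux_inner_proj E hsa hid, inner_self_eq_norm_sq]
  have h2 : RCLike.re (inner ℂ w (E w) : ℂ) ≤ ‖w‖ * ‖E w‖ :=
    (RCLike.re_le_norm _).trans (norm_inner_le_norm _ _)
  rcases eq_or_lt_of_le (norm_nonneg (E w)) with h | h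
  · rw [← h]; exact norm_nonneg w
  · have h3 : ‖E w‖ * ‖E w‖ ≤ ‖w‖ * ‖E w‖ := by nlinarith
    exact le_of_mul_le_mul_right h3 h

private lemma aux_proj_eq (E : H →L[ℂ] H) (hsa : adjoint E = E) (hid : E * E = E) (w : H)
    (h : ‖w‖ ≤ ‖E w‖) : E w = w := by
  have hnorm : ‖E w‖ = ‖w‖ := le_antisymm (aux_proj_norm_le E hsa hid w) h
  have h1 : (inner ℂ w (E w) : ℂ) = inner ℂ (E w) (E w) := aux_inner_proj E hsa hid w
  have h2 : (inner ℂ (E w) w : ℂ) = inner ℂ (E w) (E w) := by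
    rw [← inner_conj_symm, h1, inner_conj_symm]
  have h3 : (inner ℂ (w - E w) (w - E w) : ℂ) = 0 := by
    rw [inner_sub_sub_self, h1, h2, inner_self_eq_norm_sq_to_K, inner_self_eq_norm_sq_to_K, hnorm]
    ring
  have h4 := inner_self_eq_zero.mp h3
  exact (sub_eq_zero.mp h4).symm

end Aux

/-- For a power partial isometry `T`, the subspace `⋂_{n≥1} T^n H` is reducing for
`T`, and the restriction of `T` to it is a co-isometry. -/
theorem inter_range_reducing_coisometry
    {H : Type*} [NormedAddCommGroup H] [InnerProductSpace ℂ H] [CompleteSpace H]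
    (T : H →L[ℂ] H)
    (hT : ∀ n : ℕ, T ^ n * (adjoint T) ^ n * T ^ n = T ^ n) :
    (∀ x ∈ ⨅ n : ℕ, LinearMap.range ((T ^ (n + 1) : H →L[ℂ] H) : H →ₗ[ℂ] H),
        T x ∈ ⨅ n : ℕ, LinearMap.range ((T ^ (n + 1) : H →L[ℂ] H) : H →ₗ[ℂ] H)) ∧
    (∀ x ∈ ⨅ n : ℕ, LinearMap.range ((T ^ (n + 1) : H →L[ℂ] H) : H →ₗ[ℂ] H),
        adjoint T x ∈ ⨅ n : ℕ, LinearMap.range ((T ^ (n + 1) : H →L[ℂ] H) : H →ₗ[ℂ] H)) ∧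
    (∀ x ∈ ⨅ n : ℕ, LinearMap.range ((T ^ (n + 1) : H →L[ℂ] H) : H →ₗ[ℂ] H), ‖adjoint T x‖ = ‖x‖) := by
  have hTs : ∀ n : ℕ, T ^ n * star (T ^ n) * T ^ n = T ^ n := by
    intro n
    have h := hT n
    rwa [← star_eq_adjoint, ← star_pow] at h
  have hEsa : ∀ n : ℕ, adjoint (T ^ n * star (T ^ n)) = T ^ n * star (T ^ n) := by
    intro n
    rw [← star_eq_adjoint, star_mul, star_star]
  have hEid : ∀ n : ℕ, (T ^ n * star (T ^ n)) * (T ^ n * star (T ^ n)) = T ^ n * star (T ^ n) := by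
    intro n
    calc (T ^ n * star (T ^ n)) * (T ^ n * star (T ^ n))
        = (T ^ n * star (T ^ n) * T ^ n) * star (T ^ n) := by simp only [mul_assoc]
      _ = T ^ n * star (T ^ n) := by rw [hTs]
  have hEfix : ∀ n : ℕ, ∀ x, x ∈ LinearMap.range ((T ^ n : H →L[ℂ] H) : H →ₗ[ℂ] H) →
      (T ^ n) (star (T ^ n) x) = x := by
    rintro n x ⟨y, rfl⟩
    have h : (T ^ n * star (T ^ n) * T ^ n) y = (T ^ n) y := by rw [hTs]
    exact h
  have hTT : ∀ x, x ∈ LinearMap.range ((T ^ 1 : H →L[ℂ] H) : H →ₗ[ℂ] H) → T (adjoint T x) = x := by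
    intro x hx
    have h := hEfix 1 x hx
    simpa [pow_one, star_eq_adjoint] using h
  have hnorm : ∀ x, x ∈ LinearMap.range ((T ^ 1 : H →L[ℂ] H) : H →ₗ[ℂ] H) → ‖adjoint T x‖ = ‖x‖ := by
    intro x hx
    have h1 : (inner ℂ (adjoint T x) (adjoint T x) : ℂ) = inner ℂ x x := by
      rw [adjoint_inner_left, hTT x hx]
    rw [inner_self_eq_norm_sq_to_K, inner_self_eq_norm_sq_to_K] at h1
    have h2 : ‖adjoint T x‖ ^ 2 = ‖x‖ ^ 2 := by exact_mod_cast h1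
    calc ‖adjoint T x‖ = Real.sqrt (‖adjoint T x‖ ^ 2) := (Real.sqrt_sq (norm_nonneg _)).symm
      _ = Real.sqrt (‖x‖ ^ 2) := by rw [h2]
      _ = ‖x‖ := Real.sqrt_sq (norm_nonneg _)
  have hcontr : ∀ w : H, ‖T w‖ ≤ ‖w‖ := by
    intro w
    have hFsa : adjoint (star T * T) = star T * T := by
      rw [← star_eq_adjoint, star_mul, star_star]
    have hFid : (star T * T) * (star T * T) = star T * T := by
      have h1 := hTs 1
      simp only [pow_one] at h1
      calc (star T * T) * (star T * T) = star T * (T * star T * T) := by simp only [mul_assoc]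
        _ = star T * T := by rw [h1]
    have h1 : (inner ℂ (T w) (T w) : ℂ) = inner ℂ w ((star T * T) w) := by
      rw [ContinuousLinearMap.mul_apply, ← adjoint_inner_right, star_eq_adjoint]
    have h2 : (inner ℂ w ((star T * T) w) : ℂ) = inner ℂ ((star T * T) w) ((star T * T) w) :=
      aux_inner_proj _ hFsa hFid w
    have h3 : ‖T w‖ ^ 2 = ‖(star T * T) w‖ ^ 2 := by
      have h := h1.trans h2
      rw [inner_self_eq_norm_sq_to_K, inner_self_eq_norm_sq_to_K] at h
      exact_mod_cast h
    have h4 : ‖(star T * T) w‖ ≤ ‖w‖ := aux_proj_norm_le _ hFsa hFid w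
    nlinarith [norm_nonneg (T w), norm_nonneg ((star T * T) w), norm_nonneg w]
  refine ⟨?_, ?_, ?_⟩
  · -- T-invariance
    intro x hx
    rw [Submodule.mem_iInf] at hx ⊢
    intro n
    obtain ⟨y, hy⟩ := hx n
    refine ⟨T y, ?_⟩
    have h : (T ^ (n + 1) * T) y = (T * T ^ (n + 1)) y := by
      rw [← pow_succ, ← pow_succ']
    rw [← hy]; exact h
  · -- T*-invariance
    intro x hx
    rw [Submodule.mem_iInf] at hx ⊢
    intro n
    set z := (T ^ (n + 1)) (star (T ^ (n + 1)) (adjoint T x)) with hz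
    have hst : star (T ^ (n + 2)) x = star (T ^ (n + 1)) (adjoint T x) := by
      simp only [pow_succ' T (n + 1), star_mul, ContinuousLinearMap.mul_apply, star_eq_adjoint]
    have hzx : T z = x := by
      have h1 : T z = (T ^ (n + 2)) (star (T ^ (n + 2)) x) := by
        rw [hz, hst, ← ContinuousLinearMap.mul_apply T (T ^ (n + 1)), ← pow_succ']
      rw [h1]
      exact hEfix (n + 2) x (hx (n + 1))
    have hxn : ‖adjoint T x‖ = ‖x‖ := hnorm x (hx 0)
    have hle : ‖adjoint T x‖ ≤ ‖(T ^ (n + 1) * star (T ^ (n + 1))) (adjoint T x)‖ := by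
      have hEz : (T ^ (n + 1) * star (T ^ (n + 1))) (adjoint T x) = z := by
        rw [ContinuousLinearMap.mul_apply, hz]
      rw [hEz]
      calc ‖adjoint T x‖ = ‖x‖ := hxn
        _ = ‖T z‖ := by rw [hzx]
        _ ≤ ‖z‖ := hcontr z
    have heq := aux_proj_eq (T ^ (n + 1) * star (T ^ (n + 1))) (hEsa (n + 1)) (hEid (n + 1))
      (adjoint T x) hle
    rw [ContinuousLinearMap.mul_apply] at heq
    exact ⟨star (T ^ (n + 1)) (adjoint T x), heq⟩
  · intro x hx
    rw [Submodule.mem_iInf] at hx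
    exact hnorm x (hx 0)
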